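/- For an edge with baseline probability p⁰ ∈ (0,1), sensitivity s ≥ 1, and investment x ≥ 0, the perceived probability w(p⁰ e^{-s x}) = exp(-(-log p⁰ + s x)^α) is a convex, strictly decreasing function of x for any α ∈ (0,1], and tends to 0 as x → ∞. -/

import Mathlib

open Real Set Filter

lemma exp_comp_convexOn {s : Set ℝ} {f : ℝ → ℝ} (hf : ConvexOn ℝ s f) :
    ConvexOn ℝ s (fun x => Real.exp (f x)) := by
  refine ⟨hf.1, fun x hx y hy a b ha hb hab => ?_⟩
  calc Real.exp (f (a • x + b • y)) ≤ Real.exp (a * f x + b * f y) := by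
        exact Real.exp_le_exp.2 (by simpa [smul_eq_mul] using hf.2 hx hy ha hb hab)
    _ ≤ a • Real.exp (f x) + b • Real.exp (f y) := by
        simpa [smul_eq_mul] using convexOn_exp.2 (mem_univ (f x)) (mem_univ (f y)) ha hb hab

/-- For an edge with baseline probability `p⁰ ∈ (0,1)`, sensitivity `s ≥ 1`, and
investment `x ≥ 0`, the perceived probability
`w(p⁰ e^{-s x}) = exp(-(-log p⁰ + s x)^α)` is convex and strictly decreasing on
`[0,∞)` for any `α ∈ (0,1]`, and tends to `0` as `x → ∞`. -/
theorem perceived_edge_probability_properties (p0 s α : ℝ)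
    (hp0 : p0 ∈ Ioo (0:ℝ) 1) (hs : 1 ≤ s) (hα : α ∈ Ioc (0:ℝ) 1) :
    (∀ x : ℝ, 0 ≤ x →
      Real.exp (-(-Real.log (p0 * Real.exp (-(s * x)))) ^ α) =
        Real.exp (-(-Real.log p0 + s * x) ^ α)) ∧
    ConvexOn ℝ (Ici (0:ℝ)) (fun x : ℝ => Real.exp (-(-Real.log p0 + s * x) ^ α)) ∧
    StrictAntiOn (fun x : ℝ => Real.exp (-(-Real.log p0 + s * x) ^ α)) (Ici (0:ℝ)) ∧
    Tendsto (fun x : ℝ => Real.exp (-(-Real.log p0 + s * x) ^ α)) atTop (nhds 0) := by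
  have hc : 0 < -Real.log p0 := by
    have := Real.log_neg hp0.1 hp0.2; linarith
  have hspos : 0 < s := lt_of_lt_of_le one_pos hs
  set c : ℝ := -Real.log p0 with hcdef
  have harg : ∀ x : ℝ, 0 ≤ x → (0:ℝ) ≤ c + s * x := fun x hx => by positivity
  refine ⟨?_, ?_, ?_, ?_⟩
  · intro x hx
    congr 2
    rw [Real.log_mul (ne_of_gt hp0.1) (Real.exp_ne_zero _), Real.log_exp]
    rw [hcdef]
    ring
  · -- convexity
    have hconc := Real.concaveOn_rpow hα.1.le hα.2
    have hinner : ConvexOn ℝ (Ici (0:ℝ)) (fun x : ℝ => -(c + s * x) ^ α) := by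
      refine ⟨convex_Ici 0, fun x hx y hy a b ha hb hab => ?_⟩
      have key := hconc.2 (x := c + s * x) (y := c + s * y)
        (harg x hx) (harg y hy) ha hb hab
      simp only [smul_eq_mul]
      have heq : c + s * (a * x + b * y) = a * (c + s * x) + b * (c + s * y) := by
        nlinarith [hab]
      rw [heq]
      simp only [smul_eq_mul] at key
      linarith [key]
    exact exp_comp_convexOn hinner
  · intro x hx y hy hxy
    simp only
    apply Real.exp_lt_exp.2
    apply neg_lt_neg
    exact Real.rpow_lt_rpow (harg x hx) (by nlinarith) hα.1
  · have h1 : Tendsto (fun x : ℝ => c + s * x) atTop atTop :=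
      tendsto_atTop_add_const_left _ c (tendsto_id.const_mul_atTop hspos)
    have h2 : Tendsto (fun x : ℝ => (c + s * x) ^ α) atTop atTop :=
      (tendsto_rpow_atTop hα.1).comp h1
    have h3 : Tendsto (fun x : ℝ => -(c + s * x) ^ α) atTop atBot :=
      tendsto_neg_atBot_iff.2 h2
    exact Real.tendsto_exp_atBot.comp h3
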